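/- arXiv:math/0210319 — 2 statements merged into one kernel-verified Lean document; each statement's English description precedes it below -/
import Mathlib

section
/- For θ > 0 and each n ≥ 1, the values g(λ) = n!/[θ]_n · ∏_{j=1}^ℓ 1/(λ_j · h_θ(Λ_j)), where h_θ(k) = ∑_{i=1}^k 1/(θ+i-1), λ ranges over compositions of n, and Λ_j = λ_j + ... + λ_ℓ, sum to 1. -/
noncomputable def risingFact (x : ℝ) (k : ℕ) : ℝ := ∏ i ∈ Finset.range k, (x + i)

/-- generalized harmonic number h_θ(k) = ∑_{i=1}^k 1/(θ+i-1) -/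
noncomputable def genHarmonic (θ : ℝ) (k : ℕ) : ℝ := ∑ i ∈ Finset.range k, 1 / (θ + i)

noncomputable def listProd (θ : ℝ) (l : List ℕ) : ℝ :=
  ∏ j : Fin l.length, 1 / ((l.get j : ℝ) * genHarmonic θ ((l.drop j).sum))

lemma listProd_nil (θ : ℝ) : listProd θ [] = 1 := by simp [listProd]

lemma listProd_cons (θ : ℝ) (a : ℕ) (l : List ℕ) :
    listProd θ (a :: l) = 1 / ((a : ℝ) * genHarmonic θ (a + l.sum)) * listProd θ l := by
  have h : listProd θ (a :: l) = ∏ j : Fin (l.length + 1),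
      (fun j : Fin (l.length + 1) =>
        1 / (((a :: l).get j : ℝ) * genHarmonic θ ((List.drop (j : ℕ) (a :: l)).sum))) j := rfl
  rw [h, Fin.prod_univ_succ]
  simp [listProd]

lemma blocks_ne_nil {n : ℕ} (c : Composition (n + 1)) : c.blocks ≠ [] := by
  intro h
  have := c.blocks_sum
  rw [h] at this
  simp at this

lemma head!_pos {n : ℕ} (c : Composition (n + 1)) : 0 < c.blocks.head! := by
  have h := blocks_ne_nil c
  exact c.blocks_pos (List.head!_mem_self h)

lemma head!_le {n : ℕ} (c : Composition (n + 1)) : c.blocks.head! ≤ n + 1 := by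
  have h := blocks_ne_nil c
  have hs := c.blocks_sum
  have : c.blocks.head! :: c.blocks.tail = c.blocks := List.cons_head!_tail h
  rw [← this] at hs
  simp only [List.sum_cons] at hs
  omega

lemma tail_sum {n : ℕ} (c : Composition (n + 1)) :
    c.blocks.tail.sum = n - (c.blocks.head! - 1) := by
  have h := blocks_ne_nil c
  have hs := c.blocks_sum
  have hd := head!_pos c
  have : c.blocks.head! :: c.blocks.tail = c.blocks := List.cons_head!_tail h
  rw [← this] at hs
  simp only [List.sum_cons] at hs
  omega

def compEquiv (n : ℕ) : Composition (n + 1) ≃ Σ k : Fin (n + 1), Composition (n - k) where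
  toFun c := ⟨⟨c.blocks.head! - 1, by have := head!_le c; have := head!_pos c; omega⟩,
    ⟨c.blocks.tail, by intro i hi; exact c.blocks_pos (List.mem_of_mem_tail hi), tail_sum c⟩⟩
  invFun p := ⟨(p.1 + 1) :: p.2.blocks, by
      intro i hi
      rcases List.mem_cons.1 hi with h | h
      · omega
      · exact p.2.blocks_pos h, by
      have hs := p.2.blocks_sum
      have hk := p.1.2
      simp only [List.sum_cons, hs]
      omega⟩
  left_inv c := by
    have h := blocks_ne_nil c
    have hd := head!_pos c
    ext1
    simp only
    rw [show c.blocks.head! - 1 + 1 = c.blocks.head! by omega]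
    exact List.cons_head!_tail h
  right_inv p := rfl

noncomputable def rr (θ : ℝ) (n : ℕ) : ℝ := risingFact θ n / n.factorial

noncomputable def SS (θ : ℝ) (n : ℕ) : ℝ :=
  ∑ k ∈ Finset.range n, rr θ (n - (k + 1)) / ((k : ℝ) + 1)

lemma risingFact_pos {θ : ℝ} (hθ : 0 < θ) (n : ℕ) : 0 < risingFact θ n :=
  Finset.prod_pos fun i _ => by positivity

lemma rr_zero (θ : ℝ) : rr θ 0 = 1 := by simp [rr, risingFact]

lemma rr_rec (θ : ℝ) (n : ℕ) : ((n : ℝ) + 1) * rr θ (n + 1) = (θ + n) * rr θ n := by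
  have h : risingFact θ (n + 1) = risingFact θ n * (θ + n) := Finset.prod_range_succ _ _
  have hf : ((n + 1).factorial : ℝ) = ((n : ℝ) + 1) * n.factorial := by
    push_cast [Nat.factorial_succ]; ring
  have h1 : (n.factorial : ℝ) ≠ 0 := Nat.cast_ne_zero.2 (Nat.factorial_ne_zero n)
  have h2 : ((n : ℝ) + 1) ≠ 0 := by positivity
  rw [rr, rr, h, hf]
  field_simp

lemma genHarmonic_succ (θ : ℝ) (n : ℕ) :
    genHarmonic θ (n + 1) = genHarmonic θ n + 1 / (θ + n) :=
  Finset.sum_range_succ _ _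

lemma genHarmonic_pos {θ : ℝ} (hθ : 0 < θ) {n : ℕ} (hn : 1 ≤ n) :
    0 < genHarmonic θ n := by
  apply Finset.sum_pos (fun i _ => by positivity)
  exact Finset.nonempty_range_iff.2 (by omega)

lemma SS_step (θ : ℝ) (n : ℕ) :
    ((n : ℝ) + 1) * SS θ (n + 1) = (θ + n) * SS θ n + rr θ n := by
  have hA : ∀ m : ℕ, ∑ k ∈ Finset.range m, rr θ (m - (k + 1)) = ∑ j ∈ Finset.range m, rr θ j := by
    intro m
    rw [← Finset.sum_range_reflect]
    apply Finset.sum_congr rfl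
    intro k hk
    simp only [Finset.mem_range] at hk
    congr 1
    omega
  -- V n = ∑_{k<n} (n-(k+1)) * rr (n-(k+1)) / (k+1)
  set V : ℝ := ∑ k ∈ Finset.range n, ((n - (k + 1) : ℕ) : ℝ) * rr θ (n - (k + 1)) / ((k : ℝ) + 1) with hV
  have h1 : ((n : ℝ) + 1) * SS θ (n + 1)
      = (θ * SS θ n + V) + ∑ j ∈ Finset.range (n + 1), rr θ j := by
    rw [SS, Finset.mul_sum]
    rw [show (∑ k ∈ Finset.range (n+1), ((n:ℝ)+1) * (rr θ (n + 1 - (k + 1)) / ((k:ℝ)+1)))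
        = ∑ k ∈ Finset.range (n+1), (((n - k : ℕ):ℝ) * rr θ (n - k) / ((k:ℝ)+1) + rr θ (n - k)) from ?_]
    · rw [Finset.sum_add_distrib]
      congr 1
      · -- ∑_{k<n+1} (n-k) rr(n-k)/(k+1) = θ SS n + V
        rw [Finset.sum_range_succ]
        simp only [Nat.sub_self, Nat.cast_zero, zero_mul, zero_div, add_zero]
        rw [SS, Finset.mul_sum, hV, ← Finset.sum_add_distrib]
        apply Finset.sum_congr rfl
        intro k hk
        simp only [Finset.mem_range] at hk
        have hrec : ((n - (k+1) : ℕ) : ℝ) + 1 = ((n - k : ℕ) : ℝ) := by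
          push_cast [Nat.cast_sub (by omega : k + 1 ≤ n), Nat.cast_sub (le_of_lt hk)]; ring
        have := rr_rec θ (n - (k + 1))
        rw [show n - (k+1) + 1 = n - k by omega] at this
        rw [hrec] at this
        rw [this]
        ring
      · -- reflection
        rw [show (∑ k ∈ Finset.range (n+1), rr θ (n - k))
            = ∑ k ∈ Finset.range (n+1), rr θ (n + 1 - (k + 1)) from by
          apply Finset.sum_congr rfl; intro k hk; congr 1; omega]
        exact hA (n + 1)
    · apply Finset.sum_congr rfl
      intro k hk
      simp only [Finset.mem_range] at hk
      have hk' : k ≤ n := by omega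
      rw [show n + 1 - (k + 1) = n - k by omega]
      have hcast : ((n : ℝ) + 1) = ((n - k : ℕ) : ℝ) + ((k : ℝ) + 1) := by
        push_cast [Nat.cast_sub hk']; ring
      rw [hcast]
      have hk0 : ((k : ℝ) + 1) ≠ 0 := by positivity
      field_simp
  have h2 : (n : ℝ) * SS θ n = V + ∑ j ∈ Finset.range n, rr θ j := by
    rw [SS, Finset.mul_sum, hV, ← hA n, ← Finset.sum_add_distrib]
    apply Finset.sum_congr rfl
    intro k hk
    simp only [Finset.mem_range] at hk
    have hcast : (n : ℝ) = ((n - (k+1) : ℕ) : ℝ) + ((k : ℝ) + 1) := by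
      push_cast [Nat.cast_sub (by omega : k + 1 ≤ n)]; ring
    rw [hcast]
    have hk0 : ((k : ℝ) + 1) ≠ 0 := by positivity
    field_simp
  rw [h1, Finset.sum_range_succ]
  have := h2
  linarith [h2]

lemma SS_eq (θ : ℝ) (hθ : 0 < θ) (n : ℕ) : SS θ n = rr θ n * genHarmonic θ n := by
  induction n with
  | zero => simp [SS, genHarmonic]
  | succ n ih =>
    have hn1 : ((n : ℝ) + 1) ≠ 0 := by positivity
    apply mul_left_cancel₀ hn1
    rw [SS_step θ n, ih, genHarmonic_succ]
    have hrec := rr_rec θ n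
    have hθn : (θ + (n : ℝ)) ≠ 0 := by positivity
    have : ((n:ℝ)+1) * (rr θ (n+1) * (genHarmonic θ n + 1/(θ+n)))
        = (((n:ℝ)+1) * rr θ (n+1)) * genHarmonic θ n + (((n:ℝ)+1) * rr θ (n+1)) * (1/(θ+n)) := by ring
    rw [this, hrec]
    field_simp

noncomputable def FF (θ : ℝ) (n : ℕ) : ℝ := ∑ c : Composition n, listProd θ c.blocks

lemma FF_zero (θ : ℝ) : FF θ 0 = 1 := by
  have h : ∀ c : Composition 0, listProd θ c.blocks = 1 := by
    intro c
    have hb : c.blocks = [] := by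
      cases hb : c.blocks with
      | nil => rfl
      | cons a l =>
        exfalso
        have h1 := c.blocks_pos (hb ▸ List.mem_cons_self)
        have h2 := c.blocks_sum
        rw [hb] at h2
        simp only [List.sum_cons] at h2
        omega
    rw [hb, listProd_nil]
  rw [FF, Finset.sum_congr rfl (fun c _ => h c), Finset.sum_const, Finset.card_univ,
    composition_card]
  norm_num

lemma FF_succ (θ : ℝ) (n : ℕ) :
    FF θ (n + 1) = ∑ k ∈ Finset.range (n + 1),
      1 / (((k : ℝ) + 1) * genHarmonic θ (n + 1)) * FF θ (n - k) := by
  rw [FF]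
  rw [Fintype.sum_equiv (compEquiv n) _
    (fun p => listProd θ ((p.1 + 1 : ℕ) :: p.2.blocks)) ?_]
  · rw [← Finset.univ_sigma_univ, Finset.sum_sigma, ← Fin.sum_univ_eq_sum_range]
    apply Finset.sum_congr rfl
    intro k _
    have hsum : ∀ c : Composition (n - (k : ℕ)), ((k : ℕ) + 1) + c.blocks.sum = n + 1 := by
      intro c
      rw [c.blocks_sum]
      have := k.2
      omega
    rw [FF, Finset.mul_sum]
    apply Finset.sum_congr rfl
    intro c _
    rw [listProd_cons, hsum c]
    push_cast
    ring
  · intro c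
    have h := blocks_ne_nil c
    have hd := head!_pos c
    simp only [compEquiv, Equiv.coe_fn_mk]
    congr 1
    show c.blocks = (c.blocks.head! - 1 + 1) :: c.blocks.tail
    rw [show c.blocks.head! - 1 + 1 = c.blocks.head! by omega]
    exact (List.cons_head!_tail h).symm

lemma FF_eq (θ : ℝ) (hθ : 0 < θ) : ∀ n : ℕ, FF θ n = rr θ n := by
  intro n
  induction n using Nat.strong_induction_on with
  | _ n ih =>
    match n with
    | 0 => rw [FF_zero, rr_zero]
    | n + 1 =>
      rw [FF_succ]
      have hh : genHarmonic θ (n + 1) ≠ 0 := ne_of_gt (genHarmonic_pos hθ (by omega))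
      have hs : ∑ k ∈ Finset.range (n + 1),
          1 / (((k : ℝ) + 1) * genHarmonic θ (n + 1)) * FF θ (n - k)
          = (1 / genHarmonic θ (n + 1)) * SS θ (n + 1) := by
        rw [SS, Finset.mul_sum]
        apply Finset.sum_congr rfl
        intro k hk
        simp only [Finset.mem_range] at hk
        rw [ih (n - k) (by omega), show n + 1 - (k + 1) = n - k by omega]
        have hk0 : ((k : ℝ) + 1) ≠ 0 := by positivity
        field_simp
      rw [hs, SS_eq θ hθ]
      field_simp

theorem newSamplingFormula_sums_to_one (θ : ℝ) (hθ : 0 < θ) (n : ℕ) (hn : 1 ≤ n) :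
    ∑ c : Composition n,
      ((n.factorial : ℝ) / risingFact θ n) *
        ∏ j : Fin c.length,
          1 / ((c.blocksFun j : ℝ) * genHarmonic θ ((c.blocks.drop j).sum)) = 1 := by
  have hprod : ∀ c : Composition n,
      (∏ j : Fin c.length,
        1 / ((c.blocksFun j : ℝ) * genHarmonic θ ((c.blocks.drop j).sum)))
      = listProd θ c.blocks := fun c => rfl
  calc ∑ c : Composition n, ((n.factorial : ℝ) / risingFact θ n) *
        ∏ j : Fin c.length,
          1 / ((c.blocksFun j : ℝ) * genHarmonic θ ((c.blocks.drop j).sum))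
      = ((n.factorial : ℝ) / risingFact θ n) * FF θ n := by
        rw [FF, Finset.mul_sum]
        exact Finset.sum_congr rfl fun c _ => by rw [hprod c]
    _ = 1 := by
        rw [FF_eq θ hθ n, rr]
        have h1 : risingFact θ n ≠ 0 := ne_of_gt (risingFact_pos hθ n)
        have h2 : (n.factorial : ℝ) ≠ 0 := Nat.cast_ne_zero.2 (Nat.factorial_ne_zero n)
        field_simp
end

section
/- For θ > 0 and n ≥ 1, defining q(n:m) = (n!/(n-m)!)·([θ]_{n-m}/[θ]_n)·1/(m·h_θ(n)) for 1 ≤ m ≤ n, one has ∑_{m=1}^n q(n:m) = 1. -/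
lemma risingFact_succ (x : ℝ) (k : ℕ) :
    risingFact x (k + 1) = risingFact x k * (x + k) := by
  simp [risingFact, Finset.prod_range_succ]

lemma risingFact_pos_s14 {x : ℝ} (hx : 0 < x) (k : ℕ) : 0 < risingFact x k := by
  apply Finset.prod_pos
  intro i _
  positivity

lemma telescope (θ : ℝ) (n : ℕ) :
    ∑ k ∈ Finset.range n, (θ - 1) * risingFact θ k / ((k + 1).factorial : ℝ) =
      risingFact θ n / (n.factorial : ℝ) - 1 := by
  induction n with
  | zero => simp [risingFact]
  | succ n ih =>
    rw [Finset.sum_range_succ, ih, risingFact_succ, Nat.factorial_succ]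
    have h1 : ((n.factorial : ℝ)) ≠ 0 := Nat.cast_ne_zero.mpr n.factorial_ne_zero
    have h2 : ((n : ℝ) + 1) ≠ 0 := by positivity
    field_simp
    push_cast
    ring

lemma key (θ : ℝ) (hθ : 0 < θ) : ∀ n : ℕ, 1 ≤ n →
    ∑ m ∈ Finset.Icc 1 n,
      ((n.factorial : ℝ) / ((n - m).factorial : ℝ)) * risingFact θ (n - m) / (m : ℝ) =
      risingFact θ n * genHarmonic θ n := by
  intro n hn
  induction n with
  | zero => omega
  | succ n ih =>
    rcases Nat.eq_or_lt_of_le hn with h1 | h1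
    · -- n + 1 = 1
      have : n = 0 := by omega
      subst this
      simp [risingFact, genHarmonic]
      field_simp
    · have hn1 : 1 ≤ n := by omega
      have IH := ih hn1
      rw [Finset.sum_Icc_succ_top (by omega : 1 ≤ n + 1)]
      have hstep : ∀ m ∈ Finset.Icc 1 n,
          (((n+1).factorial : ℝ) / (((n+1) - m).factorial : ℝ)) *
              risingFact θ ((n+1) - m) / (m : ℝ) =
            (θ + n) * (((n.factorial : ℝ) / ((n - m).factorial : ℝ)) *
              risingFact θ (n - m) / (m : ℝ)) +
            (θ - 1) * ((n.factorial : ℝ) * risingFact θ (n - m) /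
              (((n - m) + 1).factorial : ℝ)) := by
        intro m hm
        simp only [Finset.mem_Icc] at hm
        obtain ⟨hm1, hm2⟩ := hm
        obtain ⟨k, rfl⟩ : ∃ k, n = m + k := ⟨n - m, by omega⟩
        have e1 : m + k + 1 - m = k + 1 := by omega
        have e2 : m + k - m = k := by omega
        rw [e1, e2, risingFact_succ, Nat.factorial_succ k, Nat.factorial_succ (m + k)]
        have hfne : ((k.factorial : ℝ)) ≠ 0 := Nat.cast_ne_zero.mpr k.factorial_ne_zero
        have hmne : (m : ℝ) ≠ 0 := by
          simp only [ne_eq, Nat.cast_eq_zero]; omega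
        have hkne : ((k : ℝ)) + 1 ≠ 0 := by positivity
        push_cast
        field_simp
        ring
      rw [Finset.sum_congr rfl hstep, Finset.sum_add_distrib, ← Finset.mul_sum, IH,
        ← Finset.mul_sum]
      have hre : ∑ m ∈ Finset.Icc 1 n,
          (n.factorial : ℝ) * risingFact θ (n - m) / (((n - m) + 1).factorial : ℝ) =
          ∑ k ∈ Finset.range n,
            (n.factorial : ℝ) * risingFact θ k / ((k + 1).factorial : ℝ) := by
        apply Finset.sum_nbij' (fun m => n - m) (fun k => n - k)
        · intro a ha; simp only [Finset.mem_Icc] at ha; simp only [Finset.mem_range]; omega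
        · intro a ha; simp only [Finset.mem_range] at ha; simp only [Finset.mem_Icc]; omega
        · intro a ha; simp only [Finset.mem_Icc] at ha; omega
        · intro a ha; simp only [Finset.mem_range] at ha; omega
        · intro a ha; rfl
      rw [hre]
      have htel : (θ - 1) * ∑ k ∈ Finset.range n,
          (n.factorial : ℝ) * risingFact θ k / ((k + 1).factorial : ℝ) =
          risingFact θ n - (n.factorial : ℝ) := by
        have := telescope θ n
        have h1 : ((n.factorial : ℝ)) ≠ 0 := Nat.cast_ne_zero.mpr n.factorial_ne_zero
        calc (θ - 1) * ∑ k ∈ Finset.range n,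
            (n.factorial : ℝ) * risingFact θ k / ((k + 1).factorial : ℝ)
            = (n.factorial : ℝ) * ∑ k ∈ Finset.range n,
              (θ - 1) * risingFact θ k / ((k + 1).factorial : ℝ) := by
              rw [Finset.mul_sum, Finset.mul_sum]
              apply Finset.sum_congr rfl
              intro k _
              ring
          _ = (n.factorial : ℝ) * (risingFact θ n / (n.factorial : ℝ) - 1) := by rw [this]
          _ = risingFact θ n - (n.factorial : ℝ) := by field_simp
      rw [htel]
      -- last term : m = n+1
      have hlast : (((n+1).factorial : ℝ) / (((n+1) - (n+1)).factorial : ℝ)) *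
          risingFact θ ((n+1) - (n+1)) / ((n + 1 : ℕ) : ℝ) = (n.factorial : ℝ) := by
        have hne : ((n : ℝ) + 1) ≠ 0 := by positivity
        simp only [Nat.sub_self, Nat.factorial_zero, Nat.cast_one, Nat.factorial_succ,
          risingFact, Finset.range_zero, Finset.prod_empty]
        push_cast
        field_simp
      rw [hlast]
      have hgh : genHarmonic θ (n + 1) = genHarmonic θ n + 1 / (θ + n) := by
        simp [genHarmonic, Finset.sum_range_succ]
      rw [hgh, risingFact_succ]
      have hθn : θ + (n : ℝ) ≠ 0 := by positivity
      field_simp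
      ring

theorem q_new_sums_to_one (θ : ℝ) (hθ : 0 < θ) (n : ℕ) (hn : 1 ≤ n) :
    ∑ m ∈ Finset.Icc 1 n,
      ((n.factorial : ℝ) / ((n - m).factorial : ℝ)) *
        (risingFact θ (n - m) / risingFact θ n) * (1 / ((m : ℝ) * genHarmonic θ n)) = 1 := by
  have hR : 0 < risingFact θ n := risingFact_pos_s14 hθ n
  have hH : 0 < genHarmonic θ n := by
    apply Finset.sum_pos
    · intro i _
      have : (0:ℝ) < θ + i := by positivity
      positivity
    · exact ⟨0, Finset.mem_range.mpr (by omega)⟩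
  have hcongr : ∀ m ∈ Finset.Icc 1 n,
      ((n.factorial : ℝ) / ((n - m).factorial : ℝ)) *
        (risingFact θ (n - m) / risingFact θ n) * (1 / ((m : ℝ) * genHarmonic θ n)) =
      (((n.factorial : ℝ) / ((n - m).factorial : ℝ)) * risingFact θ (n - m) / (m : ℝ)) *
        (1 / (risingFact θ n * genHarmonic θ n)) := by
    intro m hm
    simp only [div_eq_mul_inv, mul_inv, one_mul]
    ring
  rw [Finset.sum_congr rfl hcongr, ← Finset.sum_mul, key θ hθ n hn, mul_one_div,
    div_self (ne_of_gt (mul_pos hR hH))]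
end
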